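/- Let m ≥ 1 and n ≠ 0 be integers and let x, y ∈ ℂ. Define z = 2 + (y−2)(y+2−x²)·S_{m−1}(y)² and t = 1 − (y+2−x²)·S_{m−1}(y)·(S_m(y) − (y−1)S_{m−1}(y)). If t·S_{n−1}(z) − S_{n−2}(z) = 0, then S_{m−1}(y) ≠ 0 and S_{n−1}(z) ≠ 0. -/

import Mathlib

open Polynomial

/-- Integer-indexed Chebyshev-like polynomials: `S 0 = 1`, `S 1 = X`,
and `S (l+1) = X * S l - S (l-1)` for all `l : ℤ`
(equivalently `S l = U_l (v/2)` for the Chebyshev polynomials `U` of the second kind). -/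
@[semireducible] noncomputable def chebS (R : Type*) [CommRing R] : ℤ → R[X]
  | 0 => 1
  | 1 => X
  | (n : ℕ) + 2 => X * chebS R (n + 1) - chebS R n
  | -((n : ℕ) + 1) => X * chebS R (-n) - chebS R (-n + 1)
  termination_by n => Int.natAbs n + Int.natAbs (n - 1)

section aux
variable (R : Type*) [CommRing R]

lemma chebS_zero : chebS R 0 = 1 := by rw [chebS.eq_def]
lemma chebS_one : chebS R 1 = X := by rw [chebS.eq_def]
lemma chebS_ofNat_add_two (n : ℕ) : chebS R ((n:ℤ)+2) = X * chebS R (n + 1) - chebS R n := by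
  rw [show ((n:ℤ)+2) = Int.ofNat (n+2) by simp, chebS.eq_def]
lemma chebS_negSucc (n : ℕ) : chebS R (-((n:ℤ)+1)) = X * chebS R (-n) - chebS R (-n + 1) := by
  rw [show (-((n:ℤ)+1)) = Int.negSucc n by simp [Int.negSucc_eq], chebS.eq_def]

lemma chebS_neg_one : chebS R (-1) = 0 := by
  have := chebS_negSucc R 0
  simp [chebS_zero, chebS_one] at this
  simpa using this

lemma chebS_rec (l : ℤ) : chebS R (l + 1) = X * chebS R l - chebS R (l - 1) := by
  rcases l with k | k
  · rcases k with _ | k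
    · simp [chebS_zero, chebS_one, chebS_neg_one]
    · have := chebS_ofNat_add_two R k
      have e1 : (Int.ofNat (k+1) : ℤ) + 1 = (k:ℤ) + 2 := by simp; ring
      have e2 : (Int.ofNat (k+1) : ℤ) = (k:ℤ) + 1 := by simp
      rw [e1, e2, show ((k:ℤ)+1-1) = (k:ℤ) from by ring, this]
  · rw [Int.negSucc_eq]
    have h2 := chebS_negSucc R (k+1)
    push_cast at h2
    rw [show (-((k:ℤ)+1)+1) = -(k:ℤ) by ring, show (-((k:ℤ)+1)-1) = -((k:ℤ)+1+1) by ring, h2]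
    rw [show (-((k:ℤ)+1)+1) = -(k:ℤ) by ring]
    ring

/-- eval at 2: `S_l(2) = l + 1`. -/
lemma chebS_eval_two (l : ℤ) : (chebS ℂ l).eval 2 = (l : ℂ) + 1 := by
  have key : ∀ l : ℤ, (chebS ℂ l).eval 2 = (l : ℂ) + 1 ∧ (chebS ℂ (l-1)).eval 2 = (l : ℂ) := by
    intro l
    induction l using Int.induction_on with
    | zero => simp [chebS_zero, chebS_neg_one]
    | succ k ih =>
      have hr := chebS_rec ℂ (k : ℤ)
      constructor
      · rw [hr]
        push_cast
        simp only [eval_sub, eval_mul, eval_X]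
        rw [ih.1, ih.2]; push_cast; ring
      · rw [show ((k:ℤ)+1-1) = (k:ℤ) by ring, ih.1]; push_cast; ring
    | pred k ih =>
      have hr := chebS_rec ℂ (-(k:ℤ)-1)
      rw [show (-(k:ℤ)-1+1) = -(k:ℤ) by ring, show (-(k:ℤ)-1-1) = -(k:ℤ)-1-1 from rfl] at hr
      constructor
      · rw [show (-(k:ℤ)-1) = (-(k:ℤ))-1 by ring, ih.2]; push_cast; ring
      · have : (chebS ℂ (-(k:ℤ)-1-1)).eval 2 =
            2 * (chebS ℂ (-(k:ℤ)-1)).eval 2 - (chebS ℂ (-(k:ℤ))).eval 2 := by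
          have hh := congrArg (Polynomial.eval (2:ℂ)) hr
          simp only [eval_sub, eval_mul, eval_X] at hh
          linear_combination hh
        rw [show (-(k:ℤ)-1-1) = (-(k:ℤ)-1)-1 from rfl] at this ⊢
        rw [this, show (-(k:ℤ)-1) = (-(k:ℤ))-1 by ring, ih.2, ih.1]
        push_cast; ring
  exact (key l).1

/-- Two consecutive `S` values cannot both vanish. -/
lemma chebS_consec_ne_zero (z : ℂ) (a : ℤ) (h1 : (chebS ℂ a).eval z = 0)
    (h2 : (chebS ℂ (a-1)).eval z = 0) : False := by
  have key : ∀ k : ℤ, (chebS ℂ (a+k)).eval z = 0 ∧ (chebS ℂ (a-1+k)).eval z = 0 := by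
    intro k
    induction k using Int.induction_on with
    | zero => simpa using ⟨h1, h2⟩
    | succ k ih =>
      have hr := congrArg (Polynomial.eval z) (chebS_rec ℂ (a + k))
      simp only [eval_sub, eval_mul, eval_X] at hr
      rw [show a + (k:ℤ) - 1 = a - 1 + k by ring] at hr
      constructor
      · rw [show a + ((k:ℤ)+1) = a + k + 1 by ring, hr, ih.1, ih.2]; ring
      · rw [show a - 1 + ((k:ℤ)+1) = a + k by ring]; exact ih.1
    | pred k ih =>
      have hr := congrArg (Polynomial.eval z) (chebS_rec ℂ (a - 1 + -k))
      simp only [eval_sub, eval_mul, eval_X] at hr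
      rw [show a - 1 + -(k:ℤ) + 1 = a + -k by ring] at hr
      constructor
      · rw [show a + (-(k:ℤ)-1) = a - 1 + -k by ring]; exact ih.2
      · rw [show a - 1 + (-(k:ℤ)-1) = a - 1 + -k - 1 by ring]
        have := ih.1
        rw [hr] at this
        rw [ih.2, mul_zero, zero_sub, neg_eq_zero] at this
        exact this
  have := (key (-a)).1
  simp [chebS_zero] at this

end aux

/-- If the Riley polynomial `t·S_{n-1}(z) - S_{n-2}(z)` of the even double twist knot
`J(2m, 2n)` vanishes, then `S_{m-1}(y) ≠ 0` and `S_{n-1}(z) ≠ 0`. -/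
theorem even_Riley_nonvanishing (m n : ℤ) (hm : 1 ≤ m) (hn : n ≠ 0) (x y z t : ℂ)
    (hz : z = 2 + (y - 2) * (y + 2 - x^2) * ((chebS ℂ (m - 1)).eval y) ^ 2)
    (ht : t = 1 - (y + 2 - x^2) * (chebS ℂ (m - 1)).eval y
            * ((chebS ℂ m).eval y - (y - 1) * (chebS ℂ (m - 1)).eval y))
    (hR : t * (chebS ℂ (n - 1)).eval z - (chebS ℂ (n - 2)).eval z = 0) :
    (chebS ℂ (m - 1)).eval y ≠ 0 ∧ (chebS ℂ (n - 1)).eval z ≠ 0 := by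
  constructor
  · intro h0
    rw [h0] at hz ht
    simp at hz ht
    rw [hz, ht] at hR
    rw [chebS_eval_two (n-1), show (n:ℤ)-2 = (n-1)-1 by ring, chebS_eval_two ((n-1)-1)] at hR
    push_cast at hR
    norm_num at hR
  · intro h0
    rw [h0, mul_zero, zero_sub, neg_eq_zero] at hR
    exact chebS_consec_ne_zero z (n-1) h0 (by rw [show (n:ℤ)-1-1 = n-2 by ring]; exact hR)
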